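/- arXiv:2511.23390 — 4 statements merged into one kernel-verified Lean document; each statement's English description precedes it below -/
import Mathlib

section
/- For 0 ≤ x ≤ N and 2 ≤ y ≤ N+1-x, the number of paths from (N,1) to (x,y) with steps in E = {(-1,1),(0,-1)} that stay in the region {(x',y') : y' ≥ 1, with y' = 1 only at the starting point} equals ((y-1)/L) · C(L, N-x), where L = 2N - 2x - y + 1. -/
namespace Stmt5Aux

open Set

/-- The set of lists of integers each of whose nonempty suffixes has positive sum. -/
def staysPositive : Set (List ℤ) :=
  {l | ∀ l₂, l₂ ≠ [] → l₂ <:+ l → 0 < l₂.sum}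

theorem staysPositive_cons {x : ℤ} {l : List ℤ} :
    x::l ∈ staysPositive ↔ l ∈ staysPositive ∧ 0 < x + l.sum := by
  simp [staysPositive, List.suffix_cons_iff, or_imp, forall_and, @imp.swap _ (_ = _), and_comm]

theorem sum_nonneg_of_staysPositive : ∀ {l : List ℤ}, l ∈ staysPositive → 0 ≤ l.sum
  | [], _ => le_rfl
  | (_::_), h => (h _ (List.cons_ne_nil _ _) List.suffix_rfl).le

theorem staysPositive_cons_pos (x : ℤ) (hx : 0 < x) (l : List ℤ) :
    (x::l) ∈ staysPositive ↔ l ∈ staysPositive := by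
  rw [staysPositive_cons, and_iff_left_iff_imp]
  intro h
  have := sum_nonneg_of_staysPositive h
  positivity

/-- Lists with `p` entries `1` and `q` entries `-1`. -/
def countedSequence (p q : ℕ) : Set (List ℤ) :=
  {l | l.count 1 = p ∧ l.count (-1) = q ∧ ∀ x ∈ l, x = (1 : ℤ) ∨ x = -1}

open scoped List in
theorem mem_countedSequence_iff_perm {p q l} :
    l ∈ countedSequence p q ↔ l ~ List.replicate p (1 : ℤ) ++ List.replicate q (-1) := by
  rw [List.perm_replicate_append_replicate]
  · simp only [countedSequence, List.subset_def, mem_setOf_eq, List.mem_cons (b := (1 : ℤ)),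
      List.mem_singleton]
  · norm_num1

@[simp]
theorem counted_right_zero (p : ℕ) : countedSequence p 0 = {List.replicate p 1} := by
  ext l; simp [mem_countedSequence_iff_perm]

@[simp]
theorem counted_left_zero (q : ℕ) : countedSequence 0 q = {List.replicate q (-1)} := by
  ext l; simp [mem_countedSequence_iff_perm]

theorem length_of_mem_countedSequence {p q} {l : List ℤ} (hl : l ∈ countedSequence p q) :
    l.length = p + q := by simp [(mem_countedSequence_iff_perm.1 hl).length_eq]

theorem counted_eq_nil_iff {p q : ℕ} {l : List ℤ} (hl : l ∈ countedSequence p q) :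
    l = [] ↔ p = 0 ∧ q = 0 :=
  List.length_eq_zero_iff.symm.trans <| by simp [length_of_mem_countedSequence hl]

theorem counted_ne_nil_left {p q : ℕ} (hp : p ≠ 0) {l : List ℤ} (hl : l ∈ countedSequence p q) :
    l ≠ [] := by simp [counted_eq_nil_iff hl, hp]

theorem counted_succ_succ (p q : ℕ) :
    countedSequence (p + 1) (q + 1) =
      List.cons 1 '' countedSequence p (q + 1) ∪ List.cons (-1) '' countedSequence (p + 1) q := by
  ext l
  rw [countedSequence, countedSequence, countedSequence]
  constructor
  · intro hl
    have hlnil := counted_ne_nil_left (Nat.succ_ne_zero p) hl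
    obtain ⟨hl₀, hl₁, hl₂⟩ := hl
    obtain hlast | hlast := hl₂ (l.head hlnil) (List.head_mem hlnil)
    · refine Or.inl ⟨l.tail, ⟨?_, ?_, ?_⟩, ?_⟩
      · rw [List.count_tail (l := l) (a := 1), List.head?_eq_head hlnil, hl₀, hlast, beq_self_eq_true, if_pos rfl, Nat.add_sub_cancel]
      · rw [List.count_tail (l := l) (a := -1), List.head?_eq_head hlnil, hl₁, hlast, if_neg (by decide), Nat.sub_zero]
      · exact fun x hx => hl₂ x (List.mem_of_mem_tail hx)
      · rw [← hlast, List.cons_head_tail hlnil]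
    · refine Or.inr ⟨l.tail, ⟨?_, ?_, ?_⟩, ?_⟩
      · rw [List.count_tail (l := l) (a := 1), List.head?_eq_head hlnil, hl₀, hlast, if_neg (by decide), Nat.sub_zero]
      · rw [List.count_tail (l := l) (a := -1), List.head?_eq_head hlnil, hl₁, hlast, beq_self_eq_true, if_pos rfl,
          Nat.add_sub_cancel]
      · exact fun x hx => hl₂ x (List.mem_of_mem_tail hx)
      · rw [← hlast, List.cons_head_tail hlnil]
  · rintro (⟨t, ⟨ht₀, ht₁, ht₂⟩, rfl⟩ | ⟨t, ⟨ht₀, ht₁, ht₂⟩, rfl⟩)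
    · refine ⟨?_, ?_, ?_⟩
      · rw [List.count_cons, beq_self_eq_true, if_pos rfl, ht₀]
      · rw [List.count_cons, if_neg, ht₁]
        norm_num
      · rintro x (_ | _)
        exacts [Or.inl rfl, ht₂ x (by tauto)]
    · refine ⟨?_, ?_, ?_⟩
      · rw [List.count_cons, if_neg, ht₀]
        norm_num
      · rw [List.count_cons, beq_self_eq_true, if_pos rfl, ht₁]
      · rintro x (_ | _)
        exacts [Or.inr rfl, ht₂ x (by tauto)]

theorem countedSequence_finite : ∀ p q : ℕ, (countedSequence p q).Finite
  | 0, q => by simp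
  | p + 1, 0 => by simp
  | p + 1, q + 1 => by
    rw [counted_succ_succ, Set.finite_union, Set.finite_image_iff List.cons_injective.injOn,
      Set.finite_image_iff List.cons_injective.injOn]
    exact ⟨countedSequence_finite _ _, countedSequence_finite _ _⟩

theorem sum_of_mem_countedSequence {p q} {l : List ℤ} (hl : l ∈ countedSequence p q) :
    l.sum = p - q := by simp [(mem_countedSequence_iff_perm.1 hl).sum_eq, sub_eq_add_neg]

/-- The set of ballot sequences counted in the main lemma. -/
def S (p q : ℕ) : Set (List ℤ) := countedSequence p q ∩ staysPositive

theorem S_finite (p q : ℕ) : (S p q).Finite :=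
  (countedSequence_finite p q).inter_of_left _

theorem S_diag_empty (p : ℕ) : S (p + 1) (p + 1) = ∅ := by
  rw [eq_empty_iff_forall_notMem]
  rintro x ⟨hx, t⟩
  apply ne_of_gt (t x _ x.suffix_refl)
  · simpa using sum_of_mem_countedSequence hx
  · refine List.ne_nil_of_length_pos ?_
    rw [length_of_mem_countedSequence hx]
    exact Nat.add_pos_left (Nat.succ_pos _) _

theorem replicate_one_staysPositive (p : ℕ) : List.replicate (p + 1) (1 : ℤ) ∈ staysPositive := by
  intro t ht hsuf
  refine List.sum_pos _ (fun x hx => ?_) ht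
  rw [List.eq_of_mem_replicate (hsuf.mem hx)]
  norm_num

theorem S_right_zero (p : ℕ) : S (p + 1) 0 = {List.replicate (p + 1) 1} := by
  rw [S, counted_right_zero]
  refine Set.inter_eq_left.2 ?_
  simp [replicate_one_staysPositive p]

theorem S_succ_succ (p q : ℕ) (h : q < p) :
    S (p + 1) (q + 1) =
      List.cons 1 '' S p (q + 1) ∪ List.cons (-1) '' S (p + 1) q := by
  rw [S, counted_succ_succ, Set.union_inter_distrib_right]
  congr 1
  · ext l
    simp only [Set.mem_inter_iff, Set.mem_image, S]
    constructor
    · rintro ⟨⟨t, ht, rfl⟩, hs⟩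
      exact ⟨t, ⟨ht, (staysPositive_cons_pos 1 one_pos t).1 hs⟩, rfl⟩
    · rintro ⟨t, ⟨ht, hs⟩, rfl⟩
      exact ⟨⟨t, ht, rfl⟩, (staysPositive_cons_pos 1 one_pos t).2 hs⟩
  · ext l
    simp only [Set.mem_inter_iff, Set.mem_image, S]
    constructor
    · rintro ⟨⟨t, ht, rfl⟩, hs⟩
      exact ⟨t, ⟨ht, (staysPositive_cons.1 hs).1⟩, rfl⟩
    · rintro ⟨t, ⟨ht, hs⟩, rfl⟩
      refine ⟨⟨t, ht, rfl⟩, staysPositive_cons.2 ⟨hs, ?_⟩⟩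
      rw [sum_of_mem_countedSequence ht]
      push_cast
      omega

theorem disjoint_S_bits (p q : ℕ) :
    Disjoint (List.cons 1 '' S p (q + 1)) (List.cons (-1) '' S (p + 1) q) := by
  simp_rw [disjoint_left, mem_image, not_exists, exists_imp]
  rintro _ _ ⟨_, rfl⟩ _ ⟨_, _, _⟩

theorem choose_key (a b : ℕ) :
    (b + 1) * Nat.choose (a + b + 1) (b + 1) = (a + 1) * Nat.choose (a + b + 1) b := by
  have e1 : (a + b + 1) * Nat.choose (a + b) b = Nat.choose (a + b + 1) (b + 1) * (b + 1) :=
    Nat.add_one_mul_choose_eq (a + b) b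
  have e2 : Nat.choose (a + b + 1) ((a + b + 1) - b) = Nat.choose (a + b + 1) b :=
    Nat.choose_symm (by omega)
  have e3 : (a + b + 1) - b = a + 1 := by omega
  have e4 : (a + b + 1) * Nat.choose (a + b) a = Nat.choose (a + b + 1) (a + 1) * (a + 1) :=
    Nat.add_one_mul_choose_eq (a + b) a
  have e5 : Nat.choose (a + b) a = Nat.choose (a + b) b := by
    rw [← Nat.choose_symm (show a ≤ a + b by omega)]
    congr 1
    omega
  rw [e3] at e2
  calc (b + 1) * Nat.choose (a + b + 1) (b + 1)
      = (a + b + 1) * Nat.choose (a + b) b := by rw [e1]; ring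
    _ = (a + b + 1) * Nat.choose (a + b) a := by rw [e5]
    _ = (a + 1) * Nat.choose (a + b + 1) (a + 1) := by rw [e4]; ring
    _ = (a + 1) * Nat.choose (a + b + 1) b := by rw [e2]

/-- Counting form of the ballot problem. -/
theorem ballot_count : ∀ q p : ℕ, q ≤ p →
    (S p q).ncard * (p + q) = (p - q) * Nat.choose (p + q) p := by
  have main : ∀ q p : ℕ, q < p →
      (q ≤ p → (S p q).ncard * (p + q) = (p - q) * Nat.choose (p + q) p) := by
    refine Nat.diag_induction
      (fun q p => q ≤ p → (S p q).ncard * (p + q) = (p - q) * Nat.choose (p + q) p) ?_ ?_ ?_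
    · intro a _
      rw [S_diag_empty]
      simp
    · intro b _
      rw [S_right_zero]
      simp
    · intro a b hab ih1 ih2 _
      -- goal about S (b+1) (a+1)
      have h1 : (S b (a + 1)).ncard * (a + b + 1)
          = (b - a - 1) * Nat.choose (a + b + 1) b := by
        have h := ih1 (by omega)
        rw [show b + (a + 1) = a + b + 1 by omega, show b - (a + 1) = b - a - 1 by omega] at h
        exact h
      have h2 : (S (b + 1) a).ncard * (a + b + 1)
          = (b + 1 - a) * Nat.choose (a + b + 1) (b + 1) := by
        have h := ih2 (by omega)
        rw [show b + 1 + a = a + b + 1 by omega] at h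
        exact h
      have key := choose_key a b
      rw [S_succ_succ b a hab, Set.ncard_union_eq (disjoint_S_bits b a)
        ((S_finite _ _).image _) ((S_finite _ _).image _),
        Set.ncard_image_of_injective _ List.cons_injective,
        Set.ncard_image_of_injective _ List.cons_injective]
      have hpascal : Nat.choose (b + 1 + (a + 1)) (b + 1)
          = Nat.choose (a + b + 1) b + Nat.choose (a + b + 1) (b + 1) := by
        rw [show b + 1 + (a + 1) = (a + b + 1) + 1 by omega, Nat.choose_succ_succ]
      rw [hpascal]
      apply Nat.eq_of_mul_eq_mul_right (show 0 < a + b + 1 by omega)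
      zify [show a + 1 ≤ b from hab, show a ≤ b + 1 by omega, show a + 1 ≤ b + 1 by omega,
        show 1 ≤ b - a by omega, show a ≤ b by omega] at h1 h2 key ⊢
      linear_combination ((a : ℤ) + b + 2) * h1 + ((a : ℤ) + b + 2) * h2 + 2 * key
  intro q p hqp
  rcases eq_or_lt_of_le hqp with rfl | h
  · cases q with
    | zero => simp
    | succ q' => rw [S_diag_empty]; simp
  · exact main q p h hqp

/-! ### Paths from lists -/

/-- The path associated to a list of ±1 steps (read so that the suffix of length `k`
of `l` gives the first `k` steps of the path). -/
def pathOf (N L : ℕ) (l : List ℤ) : Fin (L + 1) → ℤ × ℤ :=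
  fun k => ((N : ℤ) - ((l.drop (L - (k : ℕ))).count 1 : ℤ), 1 + (l.drop (L - (k : ℕ))).sum)

/-- The list of steps of a path, in reverse order. -/
def listOf (N L : ℕ) (v : Fin (L + 1) → ℤ × ℤ) : List ℤ :=
  List.ofFn fun i : Fin L => (v ⟨L - (i : ℕ), by omega⟩ - v ⟨L - (i : ℕ) - 1, by omega⟩).2

theorem length_listOf (N L : ℕ) (v : Fin (L + 1) → ℤ × ℤ) : (listOf N L v).length = L := by
  simp [listOf]

theorem listOf_getElem (N L : ℕ) (v : Fin (L + 1) → ℤ × ℤ) (i : ℕ)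
    (hi : i < (listOf N L v).length) :
    (listOf N L v)[i] =
      (v ⟨L - i, by omega⟩ - v ⟨L - i - 1, by omega⟩).2 := by
  simp [listOf]

theorem count_add_count (l : List ℤ) (h : ∀ x ∈ l, x = 1 ∨ x = -1) :
    l.count 1 + l.count (-1) = l.length := by
  induction l with
  | nil => simp
  | cons x t ih =>
    have hx := h x (List.mem_cons_self)
    have ht := ih (fun y hy => h y (List.mem_cons_of_mem _ hy))
    rcases hx with rfl | rfl <;> simp [List.count_cons] <;> omega

theorem path_eq (N L : ℕ) (v : Fin (L + 1) → ℤ × ℤ) (h0 : v 0 = ((N : ℤ), 1))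
    (hstep : ∀ j : Fin L,
      v j.succ - v j.castSucc = (-1, 1) ∨ v j.succ - v j.castSucc = (0, -1)) :
    ∀ k (hk : k < L + 1), v ⟨k, hk⟩ =
      ((N : ℤ) - (((listOf N L v).drop (L - k)).count 1 : ℤ),
        1 + ((listOf N L v).drop (L - k)).sum) := by
  intro k
  induction k with
  | zero =>
    intro _
    have hdrop : (listOf N L v).drop (L - 0) = [] := by
      apply List.drop_eq_nil_of_le
      rw [length_listOf]
      omega
    rw [hdrop, Fin.mk_zero, h0]
    simp
  | succ k ih =>
    intro hk1
    have hk : k < L := by omega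
    have ihk := ih (by omega)
    have hlen : (listOf N L v).length = L := length_listOf N L v
    have hidx : L - k - 1 < (listOf N L v).length := by omega
    have hdrop : (listOf N L v).drop (L - (k + 1))
        = (listOf N L v)[L - k - 1] :: (listOf N L v).drop (L - k) := by
      rw [show L - (k + 1) = L - k - 1 by omega, List.drop_eq_getElem_cons hidx,
        show L - k - 1 + 1 = L - k by omega]
    have hget : (listOf N L v)[L - k - 1]
        = (v ⟨k + 1, by omega⟩ - v ⟨k, by omega⟩).2 := by
      rw [listOf_getElem N L v _ hidx]
      congr 3 <;> simp only [Fin.mk.injEq] <;> omega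
    have hstepk := hstep ⟨k, hk⟩
    rw [show (⟨k, hk⟩ : Fin L).succ = (⟨k + 1, by omega⟩ : Fin (L + 1)) from rfl,
      show (⟨k, hk⟩ : Fin L).castSucc = (⟨k, by omega⟩ : Fin (L + 1)) from rfl] at hstepk
    rcases hstepk with h | h
    · have he : (listOf N L v)[L - k - 1] = 1 := by rw [hget, h]
      have hv1 : v ⟨k + 1, hk1⟩ = (-1, 1) + v ⟨k, by omega⟩ := sub_eq_iff_eq_add.1 h
      rw [hv1, ihk, hdrop, he, Prod.ext_iff]
      constructor <;> simp [List.count_cons] <;> push_cast <;> ring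
    · have he : (listOf N L v)[L - k - 1] = -1 := by rw [hget, h]
      have hv1 : v ⟨k + 1, hk1⟩ = (0, -1) + v ⟨k, by omega⟩ := sub_eq_iff_eq_add.1 h
      rw [hv1, ihk, hdrop, he, Prod.ext_iff]
      constructor <;> simp [List.count_cons] <;> push_cast <;> ring

end Stmt5Aux

open Stmt5Aux in
/-- For 0 ≤ x ≤ N and 2 ≤ y ≤ N+1-x, the number of paths from (N,1) to
(x,y) with steps in E = {(-1,1),(0,-1)} that never return to the level y' = 1 after
the starting point equals ((y-1)/L) · C(L, N-x), where L = 2N - 2x - y + 1.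
(Stated in product form: card · L = (y-1) · C(L, N-x).) -/
theorem stmt5 (N x y L : ℕ) (hx : x ≤ N) (hy2 : 2 ≤ y) (hy : (y : ℤ) ≤ N + 1 - x)
    (hL : (L : ℤ) = 2 * N - 2 * x - y + 1) :
    Nat.card
        {v : Fin (L + 1) → ℤ × ℤ //
          v 0 = ((N : ℤ), 1) ∧ v (Fin.last L) = ((x : ℤ), (y : ℤ)) ∧
          (∀ j : Fin L,
            v j.succ - v j.castSucc = (-1, 1) ∨ v j.succ - v j.castSucc = (0, -1)) ∧
          (∀ j : Fin (L + 1), j ≠ 0 → 2 ≤ (v j).2)} * L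
      = (y - 1) * Nat.choose L (N - x) := by
  set a := N - x with ha
  set b := L - (N - x) with hb
  have hab : a + b = L := by omega
  have hba : b < a := by omega
  have hya : y - 1 = a - b := by omega
  have haZ : (a : ℤ) = (N : ℤ) - x := by omega
  have hbZ : (b : ℤ) = (a : ℤ) - ((y : ℤ) - 1) := by omega
  -- the equivalence with ballot sequences
  have hmem : ∀ v : Fin (L + 1) → ℤ × ℤ,
      (v 0 = ((N : ℤ), 1) ∧ v (Fin.last L) = ((x : ℤ), (y : ℤ)) ∧
        (∀ j : Fin L,
          v j.succ - v j.castSucc = (-1, 1) ∨ v j.succ - v j.castSucc = (0, -1)) ∧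
        (∀ j : Fin (L + 1), j ≠ 0 → 2 ≤ (v j).2)) → listOf N L v ∈ S a b := by
    rintro v ⟨h0, hlast, hstep, hht⟩
    have hpe := path_eq N L v h0 hstep
    have hlen := length_listOf N L v
    have hmempm : ∀ z ∈ listOf N L v, z = (1 : ℤ) ∨ z = -1 := by
      intro z hz
      obtain ⟨i, hilt, hgz⟩ := List.mem_iff_getElem.1 hz
      rw [listOf_getElem N L v i hilt] at hgz
      have hiL : i < L := by rw [length_listOf] at hilt; omega
      have hs := hstep ⟨L - i - 1, by omega⟩
      rw [show (⟨L - i - 1, by omega⟩ : Fin L).succ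
            = (⟨L - i, by omega⟩ : Fin (L + 1)) from by
          apply Fin.ext; simp [Fin.val_succ]; omega,
        show (⟨L - i - 1, by omega⟩ : Fin L).castSucc
            = (⟨L - i - 1, by omega⟩ : Fin (L + 1)) from rfl] at hs
      rcases hs with h | h <;> rw [← hgz, h] <;> simp
    have hL' := hpe L (by omega)
    rw [show (⟨L, by omega⟩ : Fin (L + 1)) = Fin.last L from rfl, hlast,
      Nat.sub_self, List.drop_zero, Prod.mk.injEq] at hL'
    have hcount1 : (listOf N L v).count 1 = a := by
      have := hL'.1
      omega
    have hcountm : (listOf N L v).count (-1) = b := by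
      have := count_add_count _ hmempm
      omega
    refine ⟨⟨hcount1, hcountm, hmempm⟩, ?_⟩
    intro t ht hsuf
    obtain ⟨s, hs⟩ := hsuf
    have htlen : t.length ≤ L ∧ 1 ≤ t.length := by
      constructor
      · rw [← hlen, ← hs]
        simp
      · cases t with
        | nil => exact absurd rfl ht
        | cons _ _ => simp
    have hdropt : (listOf N L v).drop (L - t.length) = t := by
      rw [← hs, show L - t.length = s.length from by
        have : s.length + t.length = L := by rw [← hlen, ← hs]; simp
        omega]
      exact List.drop_left
    have hpt := hpe t.length (by omega)
    have hne0 : (⟨t.length, by omega⟩ : Fin (L + 1)) ≠ 0 := by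
      simp only [ne_eq, Fin.ext_iff, Fin.val_zero]
      omega
    have hh := hht ⟨t.length, by omega⟩ hne0
    rw [hpt] at hh
    simp only [hdropt] at hh
    have : (2 : ℤ) ≤ 1 + t.sum := hh
    omega
  have hprop : ∀ l : List ℤ, l ∈ S a b →
      (pathOf N L l 0 = ((N : ℤ), 1) ∧ pathOf N L l (Fin.last L) = ((x : ℤ), (y : ℤ)) ∧
        (∀ j : Fin L, pathOf N L l j.succ - pathOf N L l j.castSucc = (-1, 1) ∨
          pathOf N L l j.succ - pathOf N L l j.castSucc = (0, -1)) ∧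
        (∀ j : Fin (L + 1), j ≠ 0 → 2 ≤ (pathOf N L l j).2)) := by
    rintro l ⟨hcs, hsp⟩
    have hlen : l.length = L := by rw [length_of_mem_countedSequence hcs]; omega
    have hsum : l.sum = (a : ℤ) - b := sum_of_mem_countedSequence hcs
    refine ⟨?_, ?_, ?_, ?_⟩
    · simp only [pathOf, Fin.val_zero, Nat.sub_zero]
      rw [List.drop_eq_nil_of_le hlen.le]
      simp
    · simp only [pathOf, Fin.val_last, Nat.sub_self, List.drop_zero]
      rw [hcs.1, hsum, Prod.mk.injEq]
      constructor <;> omega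
    · intro j
      have hj : (j : ℕ) < L := j.isLt
      have hidx : L - (j : ℕ) - 1 < l.length := by omega
      have hdrop : l.drop (L - ((j : ℕ) + 1)) = l[L - (j : ℕ) - 1] :: l.drop (L - (j : ℕ)) := by
        rw [show L - ((j : ℕ) + 1) = L - (j : ℕ) - 1 by omega, List.drop_eq_getElem_cons hidx,
          show L - (j : ℕ) - 1 + 1 = L - (j : ℕ) by omega]
      have hjs : ((j.succ : Fin (L + 1)) : ℕ) = (j : ℕ) + 1 := rfl
      have hjc : ((j.castSucc : Fin (L + 1)) : ℕ) = (j : ℕ) := rfl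
      have hm := hcs.2.2 _ (List.getElem_mem hidx)
      rcases hm with h | h
      · left
        simp only [pathOf, Fin.val_succ, Fin.coe_castSucc]
        rw [hdrop, h, Prod.ext_iff]
        constructor <;> simp [List.count_cons] <;> push_cast <;> ring
      · right
        simp only [pathOf, Fin.val_succ, Fin.coe_castSucc]
        rw [hdrop, h, Prod.ext_iff]
        constructor <;> simp [List.count_cons] <;> push_cast <;> ring
    · intro j hj
      have hjpos : 1 ≤ (j : ℕ) := by
        by_contra hc
        exact hj (Fin.ext (by rw [Fin.val_zero]; omega))
      have hdlen : L - (j : ℕ) < l.length := by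
        rw [hlen]
        omega
      have hne : l.drop (L - (j : ℕ)) ≠ [] := by
        apply List.ne_nil_of_length_pos
        rw [List.length_drop]
        omega
      have := hsp _ hne (List.drop_suffix _ _)
      simp only [pathOf]
      omega
  have hleft : ∀ (v : Fin (L + 1) → ℤ × ℤ), v 0 = ((N : ℤ), 1) →
      (∀ j : Fin L,
        v j.succ - v j.castSucc = (-1, 1) ∨ v j.succ - v j.castSucc = (0, -1)) →
      pathOf N L (listOf N L v) = v := by
    intro v h0 hstep
    funext k
    exact (path_eq N L v h0 hstep k.1 k.2).symm
  have hright : ∀ l : List ℤ, l ∈ S a b → listOf N L (pathOf N L l) = l := by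
    rintro l hl
    have hlen : l.length = L := by rw [length_of_mem_countedSequence hl.1]; omega
    apply List.ext_getElem
    · rw [length_listOf, hlen]
    · intro i h1 h2
      rw [listOf_getElem N L _ i h1]
      have hiL : i < L := by rw [length_listOf] at h1; omega
      have hd1 : L - (L - i) = i := by omega
      have hd2 : L - (L - i - 1) = i + 1 := by omega
      simp only [pathOf]
      rw [hd1, hd2]
      simp only [Prod.snd_sub]
      rw [List.drop_eq_getElem_cons h2, List.sum_cons]
      ring
  -- assemble the equivalence
  have hcard : Nat.card
      {v : Fin (L + 1) → ℤ × ℤ //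
        v 0 = ((N : ℤ), 1) ∧ v (Fin.last L) = ((x : ℤ), (y : ℤ)) ∧
        (∀ j : Fin L,
          v j.succ - v j.castSucc = (-1, 1) ∨ v j.succ - v j.castSucc = (0, -1)) ∧
        (∀ j : Fin (L + 1), j ≠ 0 → 2 ≤ (v j).2)} = (S a b).ncard := by
    rw [← Nat.card_coe_set_eq]
    apply Nat.card_congr
    refine
      { toFun := fun vv => ⟨listOf N L vv.1, hmem vv.1 vv.2⟩
        invFun := fun ll => ⟨pathOf N L ll.1, hprop ll.1 ll.2⟩
        left_inv := ?_
        right_inv := ?_ }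
    · rintro ⟨v, hv⟩
      exact Subtype.ext (hleft v hv.1 hv.2.2.1)
    · rintro ⟨l, hl⟩
      exact Subtype.ext (hright l hl)
  have hfin := ballot_count b a hba.le
  rw [hab] at hfin
  rw [hcard, hya]
  exact hfin
end

section
/- For the modified Maki–Thompson model on transient set S* (treating level y = 1 as absorbing after the first jump), the eigenvalue of the sub-generator with maximal real part is -N, it has geometric multiplicity one, and the corresponding last maximal class is the singleton {(N,1)}; consequently the unique QSD ν* accessible to (N,1) assigns strictly positive probability to every state of S*. -/
open Matrix

/-- The transient state space of the modified Maki–Thompson model. -/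
abbrev MTS (N : ℕ) := {p : Fin (N + 1) × Fin (N + 2) //
    (p.1.1 = N ∧ p.2.1 = 1) ∨ (2 ≤ p.2.1 ∧ p.1.1 + p.2.1 ≤ N + 1)}

/-- Order measure: edges decrease it. -/
def mtm (N : ℕ) (p : MTS N) : ℕ := p.val.1.1 * (N + 2) + p.val.2.1

/-- Off-diagonal transition rates. -/
def mtRate (N : ℕ) (p q : MTS N) : ℝ :=
  if q.val.1.1 + 1 = p.val.1.1 ∧ q.val.2.1 = p.val.2.1 + 1 then
    (p.val.1.1 : ℝ) * p.val.2.1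
  else if q.val.1.1 = p.val.1.1 ∧ q.val.2.1 + 1 = p.val.2.1 then
    (p.val.2.1 : ℝ) * ((N : ℝ) - p.val.1.1)
  else 0

lemma mtm_lt (N : ℕ) (p : MTS N) : mtm N p < (N + 1) * (N + 2) := by
  have h1 : p.val.1.1 ≤ N := Nat.lt_succ_iff.mp p.val.1.isLt
  have h2 : p.val.2.1 < N + 2 := p.val.2.isLt
  have h3 : p.val.1.1 * (N + 2) ≤ N * (N + 2) := Nat.mul_le_mul_right _ h1
  have h4 : (N + 1) * (N + 2) = N * (N + 2) + (N + 2) := by ring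
  unfold mtm; omega

lemma mtm_inj (N : ℕ) : Function.Injective (mtm N) := by
  intro p q h
  have hp : p.val.2.1 < N + 2 := p.val.2.isLt
  have hq : q.val.2.1 < N + 2 := q.val.2.isLt
  unfold mtm at h
  have hx : p.val.1.1 = q.val.1.1 := by
    rcases Nat.lt_trichotomy p.val.1.1 q.val.1.1 with hlt | heq | hgt
    · have : p.val.1.1 * (N + 2) + (N + 2) ≤ q.val.1.1 * (N + 2) :=
        by calc p.val.1.1 * (N + 2) + (N + 2) = (p.val.1.1 + 1) * (N + 2) := by ring
          _ ≤ q.val.1.1 * (N + 2) := Nat.mul_le_mul_right _ hlt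
      omega
    · exact heq
    · have : q.val.1.1 * (N + 2) + (N + 2) ≤ p.val.1.1 * (N + 2) :=
        by calc q.val.1.1 * (N + 2) + (N + 2) = (q.val.1.1 + 1) * (N + 2) := by ring
          _ ≤ p.val.1.1 * (N + 2) := Nat.mul_le_mul_right _ hgt
      omega
  have hy : p.val.2.1 = q.val.2.1 := by rw [hx] at h; omega
  exact Subtype.ext (Prod.ext (Fin.ext hx) (Fin.ext hy))

lemma mtRate_nonneg (N : ℕ) (p q : MTS N) : 0 ≤ mtRate N p q := by
  unfold mtRate
  have h1 : p.val.1.1 ≤ N := Nat.lt_succ_iff.mp p.val.1.isLt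
  split_ifs with h h'
  · positivity
  · have : (p.val.1.1 : ℝ) ≤ N := by exact_mod_cast h1
    have : (0:ℝ) ≤ (N : ℝ) - p.val.1.1 := by linarith
    positivity
  · exact le_refl 0

lemma mtRate_ne_zero_lt (N : ℕ) {p q : MTS N} (h : mtRate N p q ≠ 0) :
    mtm N q < mtm N p := by
  unfold mtRate at h
  unfold mtm
  split_ifs at h with h1 h2
  · obtain ⟨hx, hy⟩ := h1
    have : p.val.1.1 * (N + 2) = q.val.1.1 * (N + 2) + (N + 2) := by
      rw [← hx]; ring
    omega
  · obtain ⟨hx, hy⟩ := h2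
    rw [hx]
    omega
  · exact absurd rfl h

/-- No transitions into the initial state `(N,1)`. -/
lemma mtRate_to_start (N : ℕ) (p q : MTS N) (hq : q.val.1.1 = N) :
    mtRate N p q = 0 := by
  have hq2 : q.val.2.1 = 1 := by
    rcases q.property with ⟨_, h⟩ | ⟨h1, h2⟩
    · exact h
    · omega
  unfold mtRate
  have h1 : p.val.1.1 ≤ N := Nat.lt_succ_iff.mp p.val.1.isLt
  split_ifs with h h'
  · omega
  · -- p = (N, 2) is not a valid state
    obtain ⟨hx, hy⟩ := h'
    rcases p.property with ⟨ha, hb⟩ | ⟨ha, hb⟩ <;> omega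
  · rfl

lemma mtRate_eq_up (N : ℕ) {p q : MTS N} (hx : q.val.1.1 + 1 = p.val.1.1)
    (hy : q.val.2.1 = p.val.2.1 + 1) :
    mtRate N p q = (p.val.1.1 : ℝ) * p.val.2.1 := by
  unfold mtRate; rw [if_pos ⟨hx, hy⟩]

lemma mtRate_eq_down (N : ℕ) {p q : MTS N} (hx : q.val.1.1 = p.val.1.1)
    (hy : q.val.2.1 + 1 = p.val.2.1) :
    mtRate N p q = (p.val.2.1 : ℝ) * ((N : ℝ) - p.val.1.1) := by
  unfold mtRate
  rw [if_neg (by omega), if_pos ⟨hx, hy⟩]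

/-- Every non-initial state has an incoming transition with positive rate. -/
lemma exists_incoming (N : ℕ) (hN : 1 ≤ N) (q : MTS N) (hq : q.val.1.1 ≠ N) :
    ∃ p : MTS N, 0 < mtRate N p q := by
  have hq' : 2 ≤ q.val.2.1 ∧ q.val.1.1 + q.val.2.1 ≤ N + 1 := by
    rcases q.property with ⟨h1, _⟩ | h
    · exact absurd h1 hq
    · exact h
  obtain ⟨hy2, hsum⟩ := hq'
  by_cases hd : q.val.1.1 + q.val.2.1 ≤ N
  · -- incoming from (x, y+1)
    have hx1 : q.val.1.1 < N + 1 := q.val.1.isLt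
    have hyb : q.val.2.1 + 1 < N + 2 := by omega
    refine ⟨⟨(⟨q.val.1.1, hx1⟩, ⟨q.val.2.1 + 1, hyb⟩),
      Or.inr ⟨show 2 ≤ q.val.2.1 + 1 by omega,
        show q.val.1.1 + (q.val.2.1 + 1) ≤ N + 1 by omega⟩⟩, ?_⟩
    set P : MTS N := ⟨(⟨q.val.1.1, hx1⟩, ⟨q.val.2.1 + 1, hyb⟩),
      Or.inr ⟨show 2 ≤ q.val.2.1 + 1 by omega,
        show q.val.1.1 + (q.val.2.1 + 1) ≤ N + 1 by omega⟩⟩ with hP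
    have hx : q.val.1.1 = P.val.1.1 := rfl
    have hy : q.val.2.1 + 1 = P.val.2.1 := rfl
    rw [mtRate_eq_down N hx hy, ← hx, ← hy]
    have hxN : (q.val.1.1 : ℝ) < N := by exact_mod_cast (by omega : q.val.1.1 < N)
    have h2 : (0:ℝ) < ((q.val.2.1 + 1 : ℕ) : ℝ) := by positivity
    have h3 : (0:ℝ) < (N : ℝ) - (q.val.1.1 : ℝ) := by linarith
    exact mul_pos h2 h3
  · -- on the diagonal: incoming from (x+1, y-1)
    have hxb : q.val.1.1 + 1 < N + 1 := by omega
    have hyb : q.val.2.1 - 1 < N + 2 := by omega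
    have hprop : ((q.val.1.1 + 1 = N ∧ q.val.2.1 - 1 = 1) ∨
        (2 ≤ q.val.2.1 - 1 ∧ (q.val.1.1 + 1) + (q.val.2.1 - 1) ≤ N + 1)) := by omega
    refine ⟨⟨(⟨q.val.1.1 + 1, hxb⟩, ⟨q.val.2.1 - 1, hyb⟩), hprop⟩, ?_⟩
    set P : MTS N := ⟨(⟨q.val.1.1 + 1, hxb⟩, ⟨q.val.2.1 - 1, hyb⟩), hprop⟩ with hPd
    have hx : q.val.1.1 + 1 = P.val.1.1 := rfl
    have hy : q.val.2.1 = P.val.2.1 + 1 := by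
      show q.val.2.1 = (q.val.2.1 - 1) + 1; omega
    rw [mtRate_eq_up N hx hy]
    have hPx : P.val.1.1 = q.val.1.1 + 1 := rfl
    have hPy : P.val.2.1 = q.val.2.1 - 1 := rfl
    rw [hPx, hPy]
    have h1 : (0:ℝ) < ((q.val.1.1 + 1 : ℕ) : ℝ) := by positivity
    have h2 : (0:ℝ) < ((q.val.2.1 - 1 : ℕ) : ℝ) := by
      exact_mod_cast (by omega : 0 < q.val.2.1 - 1)
    exact mul_pos h1 h2

/-- The unnormalized quasi-stationary density, defined by downward recursion. -/
noncomputable def mtNu (N : ℕ) (q : MTS N) : ℝ :=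
  if q.val.1.1 = N then 1
  else (∑ p ∈ (Finset.univ.filter (fun p : MTS N => mtm N q < mtm N p)).attach,
      mtNu N p.1 * mtRate N p.1 q) / ((N : ℝ) * ((q.val.2.1 : ℝ) - 1))
termination_by (N + 1) * (N + 2) - mtm N q
decreasing_by
  have h1 := mtm_lt N p.1
  have h2 : mtm N q < mtm N p.1 := by
    have := p.2
    simp only [Finset.mem_filter] at this
    exact this.2
  omega

lemma mts_y_eq_one {N : ℕ} {p : MTS N} (h : p.val.1.1 = N) : p.val.2.1 = 1 := by
  rcases p.property with ⟨_, h2⟩ | ⟨h1, h2⟩ <;> omega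

lemma mts_y_ge_two {N : ℕ} {p : MTS N} (h : p.val.1.1 ≠ N) : 2 ≤ p.val.2.1 := by
  rcases p.property with ⟨h1, _⟩ | ⟨h1, _⟩
  · exact absurd h1 h
  · exact h1

lemma mts_ext {N : ℕ} {p q : MTS N} (hx : p.val.1.1 = q.val.1.1)
    (hy : p.val.2.1 = q.val.2.1) : p = q :=
  Subtype.ext (Prod.ext (Fin.ext hx) (Fin.ext hy))

lemma mtNu_pos (N : ℕ) (hN : 1 ≤ N) (q : MTS N) : 0 < mtNu N q := by
  by_cases h : q.val.1.1 = N
  · rw [mtNu, if_pos h]; exact one_pos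
  · rw [mtNu, if_neg h]
    apply div_pos
    · obtain ⟨p₀, hp₀⟩ := exists_incoming N hN q h
      have hmem : p₀ ∈ Finset.univ.filter (fun p : MTS N => mtm N q < mtm N p) := by
        simp only [Finset.mem_filter, Finset.mem_univ, true_and]
        exact mtRate_ne_zero_lt N (ne_of_gt hp₀)
      apply Finset.sum_pos'
      · intro p _
        exact mul_nonneg (mtNu_pos N hN p.1).le (mtRate_nonneg N p.1 q)
      · exact ⟨⟨p₀, hmem⟩, Finset.mem_attach _ _,
          mul_pos (mtNu_pos N hN p₀) hp₀⟩
    · have h2 : 2 ≤ q.val.2.1 := mts_y_ge_two h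
      have : (2:ℝ) ≤ (q.val.2.1 : ℝ) := by exact_mod_cast h2
      have hN' : (1:ℝ) ≤ (N : ℝ) := by exact_mod_cast hN
      nlinarith
termination_by (N + 1) * (N + 2) - mtm N q
decreasing_by
  · have h1 := mtm_lt N p.1
    have h2 : mtm N q < mtm N p.1 := by
      have := p.2
      simp only [Finset.mem_filter] at this
      exact this.2
    omega
  · have h1 := mtm_lt N p₀
    have h2 : mtm N q < mtm N p₀ := mtRate_ne_zero_lt N (ne_of_gt hp₀)
    omega

/-- The recursion satisfied by `mtNu` at non-initial states, as a full sum. -/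
lemma mtNu_eq (N : ℕ) (hN : 1 ≤ N) (q : MTS N) (h : q.val.1.1 ≠ N) :
    mtNu N q * ((N : ℝ) * ((q.val.2.1 : ℝ) - 1)) =
      ∑ p : MTS N, mtNu N p * mtRate N p q := by
  have h2 : 2 ≤ q.val.2.1 := mts_y_ge_two h
  have hd : ((N : ℝ) * ((q.val.2.1 : ℝ) - 1)) ≠ 0 := by
    have : (2:ℝ) ≤ (q.val.2.1 : ℝ) := by exact_mod_cast h2
    have hN' : (1:ℝ) ≤ (N : ℝ) := by exact_mod_cast hN
    nlinarith
  rw [mtNu, if_neg h, div_mul_cancel₀ _ hd]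
  rw [Finset.sum_attach (Finset.univ.filter (fun p : MTS N => mtm N q < mtm N p))
      (fun p => mtNu N p * mtRate N p q)]
  refine Finset.sum_subset (Finset.subset_univ _) ?_
  intro p _ hp
  simp only [Finset.mem_filter, Finset.mem_univ, true_and, not_lt] at hp
  have : mtRate N p q = 0 := by
    by_contra hc
    exact absurd (mtRate_ne_zero_lt N hc) (not_lt.mpr hp)
  rw [this, mul_zero]

lemma mtRate_self (N : ℕ) (q : MTS N) : mtRate N q q = 0 := by
  by_contra h
  exact absurd (mtRate_ne_zero_lt N h) (lt_irrefl _)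

/-- Determinant of a matrix triangular with respect to an injective `ℕ`-valued grading. -/
lemma det_tri {n : Type*} [DecidableEq n] [Fintype n] {R : Type*} [CommRing R]
    (f : n → ℕ) (hf : Function.Injective f) (M : Matrix n n R)
    (h : ∀ ⦃i j⦄, f i < f j → M i j = 0) : M.det = ∏ i, M i i := by
  have hbt : M.BlockTriangular (fun i => OrderDual.toDual (f i)) := fun i j hij => h hij
  rw [hbt.det]
  have hinj : ∀ x ∈ Finset.univ, ∀ y ∈ Finset.univ,
      OrderDual.toDual (f x) = OrderDual.toDual (f y) → x = y := by
    intro x _ y _ hxy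
    exact hf (OrderDual.toDual.injective hxy)
  rw [Finset.prod_image hinj]
  refine Finset.prod_congr rfl fun i _ => ?_
  letI : Unique {j // OrderDual.toDual (f j) = OrderDual.toDual (f i)} :=
    ⟨⟨⟨i, rfl⟩⟩, fun j => Subtype.ext (hf (OrderDual.toDual.injective j.2))⟩
  rw [Matrix.det_unique]
  have hd : (default : {j // OrderDual.toDual (f j) = OrderDual.toDual (f i)}) = ⟨i, rfl⟩ := rfl
  rw [hd]
  rfl

/-- For the modified Maki–Thompson model on the transient set
S* = {(N,1)} ∪ {(x,y) : 0 ≤ x ≤ N, 2 ≤ y ≤ N+1-x} (level y = 1 absorbing after the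
first jump), with sub-generator Q (rates: (x,y)→(x-1,y+1) at xy, (x,y)→(x,y-1) at
y(N-x), total rate Ny): the eigenvalue of Q with maximal real part is -N, it has
geometric multiplicity one, the last maximal class is the singleton {(N,1)} (the only
state with total rate N), and consequently there is a unique QSD ν* (normalized
nonnegative left eigenvector for -N), which is strictly positive on all of S*. -/
theorem stmt14 (N : ℕ) (hN : 1 ≤ N)
    (Q : Matrix {p : Fin (N + 1) × Fin (N + 2) //
          (p.1.1 = N ∧ p.2.1 = 1) ∨ (2 ≤ p.2.1 ∧ p.1.1 + p.2.1 ≤ N + 1)}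
        {p : Fin (N + 1) × Fin (N + 2) //
          (p.1.1 = N ∧ p.2.1 = 1) ∨ (2 ≤ p.2.1 ∧ p.1.1 + p.2.1 ≤ N + 1)} ℝ)
    (hQ : ∀ p q, Q p q =
      if q = p then -((N : ℝ) * p.val.2.1)
      else if q.val.1.1 + 1 = p.val.1.1 ∧ q.val.2.1 = p.val.2.1 + 1 then
        (p.val.1.1 : ℝ) * p.val.2.1
      else if q.val.1.1 = p.val.1.1 ∧ q.val.2.1 + 1 = p.val.2.1 then
        (p.val.2.1 : ℝ) * ((N : ℝ) - p.val.1.1)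
      else 0)
    (start : {p : Fin (N + 1) × Fin (N + 2) //
          (p.1.1 = N ∧ p.2.1 = 1) ∨ (2 ≤ p.2.1 ∧ p.1.1 + p.2.1 ≤ N + 1)})
    (hstart : start.val.1.1 = N ∧ start.val.2.1 = 1) :
    -- -N is an eigenvalue and every (complex) eigenvalue has real part ≤ -N
    ((-(N : ℂ)) ∈ spectrum ℂ (Q.map (algebraMap ℝ ℂ))) ∧
    (∀ μ ∈ spectrum ℂ (Q.map (algebraMap ℝ ℂ)), μ.re ≤ -(N : ℝ)) ∧
    -- geometric multiplicity one
    Module.finrank ℝ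
      ↥(LinearMap.ker (Matrix.toLin' (Q + (N : ℝ) • (1 : Matrix _ _ ℝ)))) = 1 ∧
    -- the last maximal class is the singleton {(N,1)}: the only state with rate N
    (∀ p, Q p p = -(N : ℝ) ↔ p = start) ∧
    -- unique QSD, strictly positive on all of S*
    (∃ ν, (∀ p, 0 < ν p) ∧ (∑ p, ν p = 1) ∧ ν ᵥ* Q = (-(N : ℝ)) • ν ∧
      ∀ ν', (∀ p, 0 ≤ ν' p) → (∑ p, ν' p = 1) → ν' ᵥ* Q = (-(N : ℝ)) • ν' →
        ν' = ν) := by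
  classical
  have hNR : (1:ℝ) ≤ (N:ℝ) := by exact_mod_cast hN
  have hstart_eq : ∀ p : MTS N, p.val.1.1 = N → p = start := by
    intro p hp
    exact mts_ext (by rw [hp, hstart.1]) (by rw [mts_y_eq_one hp, hstart.2])
  have hstart_x : start.val.1.1 = N := hstart.1
  have hstart_y : start.val.2.1 = 1 := hstart.2
  have hQdiag : ∀ p, Q p p = -((N:ℝ) * p.val.2.1) := fun p => by
    rw [hQ, if_pos rfl]
  have hQoff : ∀ p q : MTS N, q ≠ p → Q p q = mtRate N p q := by
    intro p q hqp
    rw [hQ, if_neg hqp]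
    rfl
  have hne_x : ∀ q : MTS N, q ≠ start → q.val.1.1 ≠ N := by
    intro q hq h
    exact hq (hstart_eq q h)
  -- entrywise description of Q as rate + diagonal
  have hQsplit : ∀ p q : MTS N, Q p q = mtRate N p q + if p = q then Q q q else 0 := by
    intro p q
    by_cases h : p = q
    · subst h
      rw [if_pos rfl, mtRate_self, zero_add]
    · rw [if_neg h, add_zero, hQoff p q (Ne.symm h)]
  -- eigen-equation unfolding for arbitrary row vectors
  have hsum_split : ∀ (w : MTS N → ℝ) (q : MTS N),
      ∑ p, w p * Q p q = w q * Q q q + ∑ p, w p * mtRate N p q := by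
    intro w q
    have : ∀ p : MTS N, w p * Q p q =
        w p * mtRate N p q + (if p = q then w q * Q q q else 0) := by
      intro p
      rw [hQsplit p q]
      by_cases h : p = q
      · subst h; rw [if_pos rfl, if_pos rfl]; ring
      · rw [if_neg h, if_neg h]; ring
    rw [Finset.sum_congr rfl (fun p _ => this p), Finset.sum_add_distrib,
      Finset.sum_ite_eq' Finset.univ q (fun _ => w q * Q q q)]
    simp [add_comm]
  have hvecMul : ∀ (w : MTS N → ℝ), (w ᵥ* Q = (-(N : ℝ)) • w) ↔
      (∀ q, ∑ p, w p * Q p q = -(N:ℝ) * w q) := by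
    intro w
    constructor
    · intro h q
      have := congrFun h q
      simpa [Matrix.vecMul, dotProduct] using this
    · intro h
      funext q
      simpa [Matrix.vecMul, dotProduct] using h q
  have hNC : ((N:ℝ) : ℂ) = (N : ℂ) := by push_cast; rfl
-- Parts 1 and 2: the spectrum
  have hspec : ∀ μ : ℂ, μ ∈ spectrum ℂ (Q.map (algebraMap ℝ ℂ)) ↔
      ∏ p : MTS N, (μ + (N:ℂ) * (p.val.2.1 : ℂ)) = 0 := by
    intro μ
    rw [spectrum.mem_iff, Matrix.isUnit_iff_isUnit_det, isUnit_iff_ne_zero, not_not]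
    have hdet : (algebraMap ℂ (Matrix (MTS N) (MTS N) ℂ) μ - Q.map (algebraMap ℝ ℂ)).det
        = ∏ p : MTS N, (μ + (N:ℂ) * (p.val.2.1 : ℂ)) := by
      rw [det_tri (mtm N) (mtm_inj N) _ ?_]
      · apply Finset.prod_congr rfl
        intro p _
        rw [Matrix.sub_apply, Matrix.algebraMap_matrix_apply, if_pos rfl, Matrix.map_apply,
          hQdiag]
        rw [Algebra.algebraMap_self_apply]
        push_cast
        ring
      · intro i j hij
        have hne : i ≠ j := fun h => by rw [h] at hij; exact lt_irrefl _ hij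
        have hz : mtRate N i j = 0 := by
          by_contra hc
          exact absurd (mtRate_ne_zero_lt N hc) (not_lt.mpr (le_of_lt hij))
        rw [Matrix.sub_apply, Matrix.algebraMap_matrix_apply, if_neg hne, Matrix.map_apply,
          hQoff i j (Ne.symm hne), hz]
        simp
    rw [hdet]
  refine ⟨?_, ?_, ?_, ?_, ?_⟩
  · -- -N is an eigenvalue
    rw [hspec]
    apply Finset.prod_eq_zero (Finset.mem_univ start)
    rw [hstart_y]
    push_cast
    ring
  · -- every eigenvalue has real part ≤ -N
    intro μ hμ
    rw [hspec] at hμ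
    obtain ⟨p, _, hp⟩ := Finset.prod_eq_zero_iff.mp hμ
    have hμ_eq : μ = -((N:ℂ) * (p.val.2.1 : ℂ)) := by linear_combination hp
    have hy1 : 1 ≤ p.val.2.1 := by
      rcases p.property with ⟨_, h1⟩ | ⟨h1, _⟩ <;> omega
    rw [hμ_eq]
    simp only [Complex.neg_re, Complex.mul_re, Complex.natCast_re, Complex.natCast_im]
    have hy1R : (1:ℝ) ≤ ((p.val.2.1 : ℕ) : ℝ) := by exact_mod_cast hy1
    have hN0 : (0:ℝ) ≤ (N:ℝ) := by linarith
    simp only [mul_zero, zero_mul, sub_zero]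
    nlinarith
  · -- Part 3: geometric multiplicity one
    set A : Matrix (MTS N) (MTS N) ℝ := Q + (N : ℝ) • (1 : Matrix (MTS N) (MTS N) ℝ) with hA
    have hAentry : ∀ p q : MTS N, A p q = Q p q + if p = q then (N:ℝ) else 0 := by
      intro p q
      rw [hA]
      simp [Matrix.add_apply, Matrix.smul_apply, Matrix.one_apply]
    set e : MTS N → ℝ := Pi.single start 1 with he
    have he_start : e start = 1 := by simp [he]
    have he_other : ∀ q, q ≠ start → e q = 0 := by
      intro q hq
      simp [he, Pi.single_eq_of_ne hq]
    have hAcol : ∀ p : MTS N, A p start = 0 := by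
      intro p
      by_cases hp : p = start
      · subst hp
        rw [hAentry, if_pos rfl, hQdiag, hstart_y]
        push_cast
        ring
      · rw [hAentry, if_neg hp, hQoff p start (Ne.symm hp), mtRate_to_start N p start hstart_x, add_zero]
    have he_ker : A.mulVec e = 0 := by
      funext p
      rw [Matrix.mulVec_single]
      simp only [Pi.zero_apply, mul_one]
      simpa using hAcol p
    have he_ne : e ≠ 0 := by
      intro h
      have := congrFun h start
      rw [he_start] at this
      simp at this
    have hker_zero : ∀ v : MTS N → ℝ, A.mulVec v = 0 → ∀ q, q ≠ start → v q = 0 := by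
      intro v hv
      have H : ∀ k : ℕ, ∀ q : MTS N, mtm N q = k → q ≠ start → v q = 0 := by
        intro k
        induction k using Nat.strong_induction_on with
        | _ k IH =>
          intro q hk hqs
          have hx : q.val.1.1 ≠ N := hne_x q hqs
          have h0 : ∑ q', A q q' * v q' = 0 := by
            have := congrFun hv q
            simpa [Matrix.mulVec, dotProduct] using this
          have hsingle : ∑ q', A q q' * v q' = A q q * v q := by
            apply Finset.sum_eq_single
            · intro q' _ hne
              by_cases hs : q' = start
              · subst hs
                rw [hAentry, if_neg hqs, hQoff q q' (Ne.symm hqs),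
                  mtRate_to_start N q q' hstart_x, add_zero, zero_mul]
              · by_cases hz : mtRate N q q' = 0
                · rw [hAentry, if_neg (fun h => hne (h.symm)), hQoff q q' hne, hz, add_zero,
                    zero_mul]
                · have hlt : mtm N q' < mtm N q := mtRate_ne_zero_lt N hz
                  rw [IH (mtm N q') (by omega) q' rfl hs, mul_zero]
            · intro h
              exact absurd (Finset.mem_univ q) h
          rw [hsingle] at h0
          have hdq : A q q ≠ 0 := by
            rw [hAentry, if_pos rfl, hQdiag]
            have h2 : 2 ≤ q.val.2.1 := mts_y_ge_two hx
            have hy2 : (2:ℝ) ≤ (q.val.2.1 : ℝ) := by exact_mod_cast h2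
            nlinarith
          exact (mul_eq_zero.mp h0).resolve_left hdq
      intro q
      exact H (mtm N q) q rfl
    have hker : LinearMap.ker (Matrix.toLin' A) = Submodule.span ℝ {e} := by
      apply le_antisymm
      · intro v hv
        rw [LinearMap.mem_ker, Matrix.toLin'_apply] at hv
        rw [Submodule.mem_span_singleton]
        refine ⟨v start, ?_⟩
        funext q
        by_cases hq : q = start
        · subst hq
          simp [he_start]
        · rw [hker_zero v hv q hq]
          simp [he_other q hq]
      · rw [Submodule.span_le, Set.singleton_subset_iff]
        exact LinearMap.mem_ker.mpr (by rw [Matrix.toLin'_apply]; exact he_ker)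
    rw [hker]
    exact finrank_span_singleton he_ne
  · -- Part 4
    intro p
    rw [hQdiag]
    constructor
    · intro h
      have hNne : (N:ℝ) ≠ 0 := by linarith
      have hy : (p.val.2.1 : ℝ) = 1 := by
        have h2 : (N:ℝ) * p.val.2.1 = (N:ℝ) * 1 := by linarith [neg_eq_iff_eq_neg.mp h]
        exact mul_left_cancel₀ hNne h2
      have hy1 : p.val.2.1 = 1 := by exact_mod_cast hy
      have hx : p.val.1.1 = N := by
        rcases p.property with ⟨h1, _⟩ | ⟨h1, _⟩
        · exact h1
        · omega
      exact hstart_eq p hx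
    · intro h
      subst h
      rw [hstart_y]
      norm_num
  · -- Part 5: the QSD
    set s : ℝ := ∑ p : MTS N, mtNu N p with hs
    have hspos : 0 < s := Finset.sum_pos (fun p _ => mtNu_pos N hN p) ⟨start, Finset.mem_univ _⟩
    refine ⟨fun p => mtNu N p / s, fun p => div_pos (mtNu_pos N hN p) hspos, ?_, ?_, ?_⟩
    · rw [← Finset.sum_div, ← hs, div_self (ne_of_gt hspos)]
    · -- eigen equation for ν
      rw [hvecMul]
      intro q
      rw [hsum_split]
      by_cases hq : q = start
      · subst hq
        have hz : ∀ p : MTS N, mtNu N p / s * mtRate N p q = 0 := by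
          intro p
          rw [mtRate_to_start N p q hstart_x, mul_zero]
        rw [Finset.sum_congr rfl (fun p _ => hz p), Finset.sum_const_zero, add_zero,
          hQdiag, hstart_y]
        push_cast
        ring
      · have hx : q.val.1.1 ≠ N := hne_x q hq
        have hrec := mtNu_eq N hN q hx
        have hterm : ∀ p : MTS N, mtNu N p / s * mtRate N p q =
            (mtNu N p * mtRate N p q) / s := fun p => by ring
        rw [Finset.sum_congr rfl (fun p _ => hterm p), ← Finset.sum_div, ← hrec, hQdiag]
        field_simp
        ring
    · -- uniqueness
      intro ν' hnn hsum1 heig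
      rw [hvecMul] at heig
      have key : ∀ k : ℕ, ∀ q : MTS N, (N + 1) * (N + 2) - mtm N q = k →
          ν' q = ν' start * mtNu N q := by
        intro k
        induction k using Nat.strong_induction_on with
        | _ k IH =>
          intro q hk
          by_cases hq : q = start
          · subst hq
            rw [mtNu, if_pos hstart_x, mul_one]
          · have hx : q.val.1.1 ≠ N := hne_x q hq
            have h2 : 2 ≤ q.val.2.1 := mts_y_ge_two hx
            have hy2 : (2:ℝ) ≤ (q.val.2.1 : ℝ) := by exact_mod_cast h2
            have hd : (0:ℝ) < (N : ℝ) * ((q.val.2.1 : ℝ) - 1) := by nlinarith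
            have he := heig q
            rw [hsum_split, hQdiag] at he
            -- ν' q * (N (y-1)) = ∑ p, ν' p * rate p q
            have he2 : ν' q * ((N:ℝ) * ((q.val.2.1 : ℝ) - 1)) =
                ∑ p, ν' p * mtRate N p q := by linarith [he]
            have hterms : ∀ p : MTS N, ν' p * mtRate N p q =
                (ν' start * mtNu N p) * mtRate N p q := by
              intro p
              by_cases hz : mtRate N p q = 0
              · rw [hz, mul_zero, mul_zero]
              · have hlt : mtm N q < mtm N p := mtRate_ne_zero_lt N hz
                have hbound := mtm_lt N p
                have hIH := IH ((N + 1) * (N + 2) - mtm N p) (by omega) p rfl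
                rw [hIH]
            rw [Finset.sum_congr rfl (fun p _ => hterms p)] at he2
            have he3 : ν' q * ((N:ℝ) * ((q.val.2.1 : ℝ) - 1)) =
                ν' start * (mtNu N q * ((N:ℝ) * ((q.val.2.1 : ℝ) - 1))) := by
              rw [he2, mtNu_eq N hN q hx, Finset.mul_sum]
              exact Finset.sum_congr rfl (fun p _ => by ring)
            have := mul_right_cancel₀ (ne_of_gt hd) (by linarith [he3] :
              ν' q * ((N:ℝ) * ((q.val.2.1 : ℝ) - 1)) =
                (ν' start * mtNu N q) * ((N:ℝ) * ((q.val.2.1 : ℝ) - 1)))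
            exact this
      have key' : ∀ q, ν' q = ν' start * mtNu N q := fun q => key _ q rfl
      have hsum' : ν' start * s = 1 := by
        rw [hs, Finset.mul_sum, ← hsum1]
        exact Finset.sum_congr rfl (fun p _ => (key' p).symm)
      have hstart_val : ν' start = 1 / s := by
        field_simp at hsum' ⊢
        linarith [hsum']
      funext q
      rw [key' q, hstart_val]
      ring
end

section
/- For the SIR epidemic model with infection rate β and removal rate μ, conditioned not to return to level I = 1 after the first jump from (N,1): a non-trivial QSD (assigning positive mass to all transient states) exists if and only if μ > βN. Equivalently, the singleton class {(N,1)} with rate βN + μ is the last maximal class if and only if βN + μ < 2μ, since the minimal rate among states with I ≥ 2 is 2μ (attained at (0,2)). -/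
open Matrix

abbrev SIRSt (N : ℕ) := {p : Fin (N + 1) × Fin (N + 2) //
    (p.1.1 = N ∧ p.2.1 = 1) ∨ (2 ≤ p.2.1 ∧ p.1.1 + p.2.1 ≤ N + 1)}

def Qent (N : ℕ) (β μ : ℝ) (p q : SIRSt N) : ℝ :=
  if q = p then -((p.val.2.1 : ℝ) * (β * p.val.1.1 + μ))
  else if q.val.1.1 + 1 = p.val.1.1 ∧ q.val.2.1 = p.val.2.1 + 1 then
    β * p.val.1.1 * p.val.2.1
  else if q.val.1.1 = p.val.1.1 ∧ q.val.2.1 + 1 = p.val.2.1 then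
    μ * p.val.2.1
  else 0

def srank {N : ℕ} (q : SIRSt N) : ℕ := q.val.1.1 * (N + 2) + q.val.2.1

lemma srank_lt {N : ℕ} (q : SIRSt N) : srank q < (N + 1) * (N + 2) := by
  have h1 : q.val.1.1 < N + 1 := q.val.1.isLt
  have h2 : q.val.2.1 < N + 2 := q.val.2.isLt
  unfold srank
  nlinarith

/-- off-diagonal entries are 0 unless rank strictly increases -/
lemma Qent_eq_zero {N : ℕ} (β μ : ℝ) (p q : SIRSt N) (hpq : q ≠ p)
    (h : srank p ≤ srank q) : Qent N β μ p q = 0 := by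
  unfold Qent srank at *
  have hc1 : ¬(q.val.1.1 + 1 = p.val.1.1 ∧ q.val.2.1 = p.val.2.1 + 1) := by
    rintro ⟨h1, h2⟩
    have : p.val.1.1 * (N + 2) = q.val.1.1 * (N + 2) + (N + 2) := by rw [← h1]; ring
    have : q.val.2.1 < N + 2 := q.val.2.isLt
    omega
  have hc2 : ¬(q.val.1.1 = p.val.1.1 ∧ q.val.2.1 + 1 = p.val.2.1) := by
    rintro ⟨h1, h2⟩
    have : p.val.1.1 * (N + 2) = q.val.1.1 * (N + 2) := by rw [h1]
    omega
  rw [if_neg hpq, if_neg hc1, if_neg hc2]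

lemma Qent_offdiag_nonneg {N : ℕ} {β μ : ℝ} (hβ : 0 ≤ β) (hμ : 0 ≤ μ)
    (p q : SIRSt N) (hpq : q ≠ p) : 0 ≤ Qent N β μ p q := by
  unfold Qent
  rw [if_neg hpq]
  split
  · positivity
  split
  · positivity
  · exact le_refl 0

/-- no transitions into the top state (N,1) -/
lemma Qent_to_top {N : ℕ} (β μ : ℝ) (p q : SIRSt N)
    (hq : q.val.1.1 = N ∧ q.val.2.1 = 1) (hpq : q ≠ p) : Qent N β μ p q = 0 := by
  unfold Qent
  have hc1 : ¬(q.val.1.1 + 1 = p.val.1.1 ∧ q.val.2.1 = p.val.2.1 + 1) := by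
    rintro ⟨h1, h2⟩
    have : p.val.1.1 < N + 1 := p.val.1.isLt
    omega
  have hc2 : ¬(q.val.1.1 = p.val.1.1 ∧ q.val.2.1 + 1 = p.val.2.1) := by
    rintro ⟨h1, h2⟩
    rcases p.2 with ⟨hs, hi⟩ | ⟨hi, hsum⟩ <;> omega
  rw [if_neg hpq, if_neg hc1, if_neg hc2]

/-- every non-top state has a predecessor of strictly larger rank with positive rate -/
lemma exists_pred {N : ℕ} {β μ : ℝ} (hβ : 0 < β) (hμ : 0 < μ)
    (q : SIRSt N) (hq : 2 ≤ q.val.2.1) :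
    ∃ p : SIRSt N, srank q < srank p ∧ 0 < Qent N β μ p q := by
  obtain ⟨⟨⟨s, hs⟩, ⟨i, hi⟩⟩, hqmem⟩ := q
  simp only at hq hqmem
  have hsum : s + i ≤ N + 1 := by omega
  by_cases hcase : s + i ≤ N
  · -- removal predecessor (s, i+1)
    refine ⟨⟨(⟨s, by omega⟩, ⟨i + 1, by omega⟩), Or.inr ⟨by simp; omega, by simp; omega⟩⟩,
      ?_, ?_⟩
    · show s * (N + 2) + i < s * (N + 2) + (i + 1); omega
    · unfold Qent
      have hc0 : (⟨(⟨s, by omega⟩, ⟨i, by omega⟩), hqmem⟩ : SIRSt N) ≠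
          ⟨(⟨s, by omega⟩, ⟨i + 1, by omega⟩), Or.inr ⟨by simp; omega, by simp; omega⟩⟩ := by
        intro h
        have := congrArg (fun r : SIRSt N => r.val.2.1) h
        simp at this
      rw [if_neg hc0, if_neg (by intro h; exact absurd h.1 (by simp)), if_pos (by exact ⟨by simp, by simp⟩)]
      show (0:ℝ) < μ * ((i + 1 : ℕ) : ℝ)
      apply mul_pos hμ
      exact_mod_cast Nat.succ_pos i
  · -- infection predecessor (s+1, i-1)
    have hsum' : s + i = N + 1 := by omega
    have hmem : ((⟨s + 1, by omega⟩ : Fin (N+1)).1 = N ∧ (⟨i - 1, by omega⟩ : Fin (N+2)).1 = 1)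
        ∨ (2 ≤ (⟨i - 1, by omega⟩ : Fin (N+2)).1 ∧
            (⟨s + 1, by omega⟩ : Fin (N+1)).1 + (⟨i - 1, by omega⟩ : Fin (N+2)).1 ≤ N + 1) := by
      by_cases h2 : i = 2
      · exact Or.inl ⟨by simp; omega, by simp; omega⟩
      · exact Or.inr ⟨by simp; omega, by simp; omega⟩
    refine ⟨⟨(⟨s + 1, by omega⟩, ⟨i - 1, by omega⟩), hmem⟩, ?_, ?_⟩
    · show s * (N + 2) + i < (s + 1) * (N + 2) + (i - 1)
      have : (s + 1) * (N + 2) = s * (N + 2) + (N + 2) := by ring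
      omega
    · unfold Qent
      have hc0 : (⟨(⟨s, by omega⟩, ⟨i, by omega⟩), hqmem⟩ : SIRSt N) ≠
          ⟨(⟨s + 1, by omega⟩, ⟨i - 1, by omega⟩), hmem⟩ := by
        intro h
        have := congrArg (fun r : SIRSt N => r.val.1.1) h
        simp at this
      rw [if_neg hc0, if_pos (by exact ⟨by simp, by simp; omega⟩)]
      show (0:ℝ) < β * ((s + 1 : ℕ) : ℝ) * ((i - 1 : ℕ) : ℝ)
      apply mul_pos (mul_pos hβ _)
      · exact_mod_cast Nat.sub_pos_of_lt (by omega)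
      · exact_mod_cast Nat.succ_pos s

noncomputable def xvec (N : ℕ) (β μ : ℝ) (q : SIRSt N) : ℝ :=
  if q.val.1.1 = N ∧ q.val.2.1 = 1 then 1
  else (∑ p ∈ (Finset.univ.filter fun p : SIRSt N => srank q < srank p).attach,
      xvec N β μ p.1 * Qent N β μ p.1 q) /
    ((q.val.2.1 : ℝ) * (β * q.val.1.1 + μ) - (β * N + μ))
termination_by (N + 1) * (N + 2) - srank q
decreasing_by
  have h1 := (Finset.mem_filter.mp p.2).2
  have h2 := srank_lt (N := N) p.1
  omega

lemma notop_two {N : ℕ} (q : SIRSt N) (htop : ¬(q.val.1.1 = N ∧ q.val.2.1 = 1)) :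
    2 ≤ q.val.2.1 := by
  rcases q.2 with h | h
  · exact absurd h htop
  · exact h.1

lemma denom_pos {N : ℕ} {β μ : ℝ} (hβ : 0 < β) (h : β * N < μ)
    (q : SIRSt N) (hq : 2 ≤ q.val.2.1) :
    0 < (q.val.2.1 : ℝ) * (β * q.val.1.1 + μ) - (β * N + μ) := by
  have hi2 : (2 : ℝ) ≤ (q.val.2.1 : ℝ) := by exact_mod_cast hq
  have hs0 : (0 : ℝ) ≤ (q.val.1.1 : ℝ) := Nat.cast_nonneg _
  have hN0 : (0 : ℝ) ≤ (N : ℝ) := Nat.cast_nonneg _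
  nlinarith [mul_le_mul_of_nonneg_right hi2 (by nlinarith : (0:ℝ) ≤ β * q.val.1.1 + μ)]

lemma xvec_pos {N : ℕ} {β μ : ℝ} (hβ : 0 < β) (hμ : 0 < μ) (h : β * N < μ) :
    ∀ q : SIRSt N, 0 < xvec N β μ q := by
  have key : ∀ k, ∀ q : SIRSt N, (N + 1) * (N + 2) - srank q ≤ k → 0 < xvec N β μ q := by
    intro k
    induction k with
    | zero => intro q hq; have := srank_lt q; omega
    | succ k ih =>
      intro q hq
      rw [xvec]
      by_cases htop : q.val.1.1 = N ∧ q.val.2.1 = 1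
      · rw [if_pos htop]; exact one_pos
      · rw [if_neg htop]
        have hq2 : 2 ≤ q.val.2.1 := notop_two q htop
        apply div_pos _ (denom_pos hβ h q hq2)
        obtain ⟨pw, hrank, hQpos⟩ := exists_pred hβ hμ q hq2
        have ihx : ∀ p : SIRSt N, srank q < srank p → 0 < xvec N β μ p := by
          intro p hp
          refine ih p ?_
          have := srank_lt (N := N) p
          omega
        apply Finset.sum_pos'
        · rintro ⟨p, hp⟩ _
          have hpr := (Finset.mem_filter.mp hp).2
          have hne : q ≠ p := by rintro rfl; omega
          exact mul_nonneg (le_of_lt (ihx p hpr))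
            (Qent_offdiag_nonneg (le_of_lt hβ) (le_of_lt hμ) p q hne)
        · refine ⟨⟨pw, Finset.mem_filter.mpr ⟨Finset.mem_univ _, hrank⟩⟩,
            Finset.mem_attach _ _, ?_⟩
          exact mul_pos (ihx pw hrank) hQpos
  intro q
  exact key ((N + 1) * (N + 2) - srank q) q le_rfl

lemma xvec_eigen {N : ℕ} {β μ : ℝ} (hβ : 0 < β) (hμ : 0 < μ) (h : β * N < μ)
    (q : SIRSt N) :
    ∑ p, xvec N β μ p * Qent N β μ p q = -(β * N + μ) * xvec N β μ q := by
  by_cases htop : q.val.1.1 = N ∧ q.val.2.1 = 1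
  · rw [Finset.sum_eq_single q]
    · have hx : xvec N β μ q = 1 := by rw [xvec, if_pos htop]
      have hQ : Qent N β μ q q = -(β * N + μ) := by
        unfold Qent
        rw [if_pos rfl, htop.1, htop.2]
        push_cast
        ring
      rw [hx, hQ]; ring
    · intro p _ hpq
      rw [Qent_to_top β μ p q htop (Ne.symm hpq), mul_zero]
    · intro hcon; exact absurd (Finset.mem_univ q) hcon
  · have hq2 : 2 ≤ q.val.2.1 := notop_two q htop
    set f : SIRSt N → ℝ := fun p => xvec N β μ p * Qent N β μ p q with hf
    have hstep1 : ∑ p, f p = f q + ∑ p ∈ Finset.univ.erase q, f p :=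
      (Finset.add_sum_erase _ f (Finset.mem_univ q)).symm
    have hstep2 : ∑ p ∈ Finset.univ.erase q, f p
        = ∑ p ∈ Finset.univ.filter (fun p : SIRSt N => srank q < srank p), f p := by
      refine (Finset.sum_subset ?_ ?_).symm
      · intro p hp
        have := (Finset.mem_filter.mp hp).2
        refine Finset.mem_erase.mpr ⟨?_, Finset.mem_univ _⟩
        rintro rfl; omega
      · intro p hp hnp
        have hne : p ≠ q := (Finset.mem_erase.mp hp).1
        have hr : srank p ≤ srank q := by
          by_contra hc
          exact hnp (Finset.mem_filter.mpr ⟨Finset.mem_univ _, by omega⟩)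
        rw [hf]
        simp only []
        rw [Qent_eq_zero β μ p q (Ne.symm hne) hr, mul_zero]
    have hstep3 : ∑ p ∈ Finset.univ.filter (fun p : SIRSt N => srank q < srank p), f p
        = xvec N β μ q * ((q.val.2.1 : ℝ) * (β * q.val.1.1 + μ) - (β * N + μ)) := by
      have hx : xvec N β μ q =
          (∑ p ∈ (Finset.univ.filter fun p : SIRSt N => srank q < srank p).attach,
            xvec N β μ p.1 * Qent N β μ p.1 q) /
          ((q.val.2.1 : ℝ) * (β * q.val.1.1 + μ) - (β * N + μ)) := by
        rw [xvec, if_neg htop]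
      have hd := denom_pos hβ h q hq2
      rw [Finset.sum_attach _ (fun p => xvec N β μ p * Qent N β μ p q)] at hx
      rw [hx]
      field_simp
      rfl
    have hQqq : Qent N β μ q q = -((q.val.2.1 : ℝ) * (β * q.val.1.1 + μ)) := by
      unfold Qent; rw [if_pos rfl]
    rw [hstep1, hstep2, hstep3, hf]
    simp only []
    rw [hQqq]
    ring

/-- For the SIR epidemic model with infection rate β and removal rate μ,
conditioned not to return to level I = 1 after the first jump from (N,1), on the
transient set Ŝ = {(N,1)} ∪ {(s,i) : 2 ≤ i ≤ N+1-s} with sub-generator Q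
(total rate i(βs+μ) at (s,i)): a non-trivial QSD assigning strictly positive mass to
all transient states exists if and only if μ > βN; equivalently, (N,1) (with rate
βN + μ) is the last maximal class iff βN + μ < 2μ, the minimal rate among states
with i ≥ 2 (attained at (0,2)). -/
theorem stmt17 (N : ℕ) (hN : 1 ≤ N) (β μ : ℝ) (hβ : 0 < β) (hμ : 0 < μ)
    (Q : Matrix {p : Fin (N + 1) × Fin (N + 2) //
          (p.1.1 = N ∧ p.2.1 = 1) ∨ (2 ≤ p.2.1 ∧ p.1.1 + p.2.1 ≤ N + 1)}
        {p : Fin (N + 1) × Fin (N + 2) //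
          (p.1.1 = N ∧ p.2.1 = 1) ∨ (2 ≤ p.2.1 ∧ p.1.1 + p.2.1 ≤ N + 1)} ℝ)
    (hQ : ∀ p q, Q p q =
      if q = p then -((p.val.2.1 : ℝ) * (β * p.val.1.1 + μ))
      else if q.val.1.1 + 1 = p.val.1.1 ∧ q.val.2.1 = p.val.2.1 + 1 then
        β * p.val.1.1 * p.val.2.1
      else if q.val.1.1 = p.val.1.1 ∧ q.val.2.1 + 1 = p.val.2.1 then
        μ * p.val.2.1
      else 0) :
    ((∃ ν : _ → ℝ, (∀ p, 0 ≤ ν p) ∧ (∑ p, ν p = 1) ∧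
        (∃ lam : ℝ, ν ᵥ* Q = (-lam) • ν) ∧ (∀ p, 0 < ν p))
      ↔ μ > β * N) ∧
    ((β * N + μ < 2 * μ) ↔ μ > β * N) := by
  have hQ' : ∀ p q, Q p q = Qent N β μ p q := fun p q => (hQ p q).trans rfl
  set p0 : SIRSt N := ⟨(⟨N, by omega⟩, ⟨1, by omega⟩), Or.inl ⟨rfl, rfl⟩⟩ with hp0
  have hp0top : p0.val.1.1 = N ∧ p0.val.2.1 = 1 := ⟨rfl, rfl⟩
  constructor
  · constructor
    · rintro ⟨ν, hν0, hsum, ⟨lam, heig⟩, hpos⟩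
      have heval : ∀ q, ∑ p, ν p * Qent N β μ p q = -lam * ν q := by
        intro q
        have h1 : (ν ᵥ* Q) q = ∑ p, ν p * Q p q := by
          simp [Matrix.vecMul, dotProduct]
        have h2 : ((-lam) • ν) q = -lam * ν q := rfl
        rw [heig, h2] at h1
        rw [h1]
        exact Finset.sum_congr rfl (fun p _ => by rw [hQ'])
      have hlam : lam = β * N + μ := by
        have hev := heval p0
        rw [Finset.sum_eq_single p0] at hev
        · have hQp0 : Qent N β μ p0 p0 = -(β * N + μ) := by
            unfold Qent
            rw [if_pos rfl]
            show -(((1:ℕ):ℝ) * (β * ((N:ℕ):ℝ) + μ)) = -(β * N + μ)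
            push_cast; ring
          rw [hQp0] at hev
          have hc : (-(β * N + μ)) * ν p0 = (-lam) * ν p0 := by
            rw [mul_comm] at hev; linarith
          have := mul_right_cancel₀ (ne_of_gt (hpos p0)) hc
          linarith
        · intro p _ hpq
          rw [Qent_to_top β μ p p0 hp0top (Ne.symm hpq), mul_zero]
        · intro hcon; exact absurd (Finset.mem_univ p0) hcon
      have hq02mem : ((0:ℕ) = N ∧ (2:ℕ) = 1) ∨ (2 ≤ (2:ℕ) ∧ (0:ℕ) + 2 ≤ N + 1) :=
        Or.inr ⟨le_refl 2, by omega⟩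
      set q02 : SIRSt N := ⟨(⟨0, by omega⟩, ⟨2, by omega⟩), hq02mem⟩ with hq02
      obtain ⟨pw, hrank, hQpos⟩ := exists_pred hβ hμ q02 (le_refl 2)
      have hnew : pw ≠ q02 := by rintro rfl; omega
      set f : SIRSt N → ℝ := fun p => ν p * Qent N β μ p q02 with hfdef
      have hsplit : ∑ p, f p = f q02 + ∑ p ∈ Finset.univ.erase q02, f p :=
        (Finset.add_sum_erase _ f (Finset.mem_univ q02)).symm
      have hge : f pw ≤ ∑ p ∈ Finset.univ.erase q02, f p := by
        apply Finset.single_le_sum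
        · intro p hp
          have hne : p ≠ q02 := (Finset.mem_erase.mp hp).1
          exact mul_nonneg (hν0 p)
            (Qent_offdiag_nonneg (le_of_lt hβ) (le_of_lt hμ) p q02 (Ne.symm hne))
        · exact Finset.mem_erase.mpr ⟨hnew, Finset.mem_univ _⟩
      have hQ02 : Qent N β μ q02 q02 = -(2 * μ) := by
        unfold Qent
        rw [if_pos rfl]
        show -(((2:ℕ):ℝ) * (β * ((0:ℕ):ℝ) + μ)) = -(2 * μ)
        push_cast; ring
      have heq := heval q02
      rw [hsplit] at heq
      have hfq02 : f q02 = ν q02 * (-(2 * μ)) := by rw [hfdef]; simp only []; rw [hQ02]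
      have hfpw : 0 < f pw := mul_pos (hpos pw) hQpos
      have hq02pos := hpos q02
      rw [hlam] at heq
      nlinarith [hfpw, hge, hq02pos]
    · intro h
      set T := ∑ p : SIRSt N, xvec N β μ p with hT
      have hTpos : 0 < T :=
        Finset.sum_pos (fun p _ => xvec_pos hβ hμ h p) ⟨p0, Finset.mem_univ p0⟩
      refine ⟨fun p => xvec N β μ p / T, fun p => le_of_lt (div_pos (xvec_pos hβ hμ h p) hTpos),
        ?_, ⟨β * N + μ, ?_⟩, fun p => div_pos (xvec_pos hβ hμ h p) hTpos⟩
      · rw [← Finset.sum_div, ← hT]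
        field_simp
      · funext q
        have h1 : ((fun p => xvec N β μ p / T) ᵥ* Q) q
            = ∑ p, xvec N β μ p / T * Q p q := by
          simp [Matrix.vecMul, dotProduct]
        rw [h1]
        have h2 : ∑ p, xvec N β μ p / T * Q p q
            = (∑ p, xvec N β μ p * Qent N β μ p q) / T := by
          rw [Finset.sum_div]
          congr 1
          funext p
          rw [hQ', div_mul_eq_mul_div]
        rw [h2, xvec_eigen hβ hμ h q]
        show -(β * N + μ) * xvec N β μ q / T = -(β * N + μ) * (xvec N β μ q / T)
        ring
  · constructor <;> (intro hh; linarith)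
end

section
/- Let Q be the sub-generator of a strictly evolutionary finite chain (singleton transient classes, DAG transition structure) with exit rates q_i, and suppose -λ = -min_i q_i is an eigenvalue of geometric multiplicity one whose associated last minimal class is {i₀}. Then any left eigenvector ν of Q with eigenvalue -λ, normalized to be a probability vector, satisfies ν_j > 0 if and only if j is accessible from i₀. -/
open Matrix

/-- Let Q be the sub-generator of a strictly evolutionary finite chain
(singleton transient classes, DAG transition structure) with exit rates q i, and
suppose -λ = -min q has left eigenspace of dimension one (geometric multiplicity one),
with associated last minimal class {i₀}: q i₀ = λ and i₀ is accessible from every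
other state of minimal rate. Then every left eigenvector ν of Q for -λ that is a
probability vector satisfies ν j > 0 iff j is accessible from i₀. -/
theorem stmt19 {ι : Type*} [Fintype ι] [DecidableEq ι]
    (Q : Matrix ι ι ℝ) (q : ι → ℝ)
    (hqpos : ∀ i, 0 < q i)
    (hdiag : ∀ i, Q i i = -q i)
    (hoff : ∀ i j, i ≠ j → 0 ≤ Q i j)
    (hDAG : ∀ i j, Relation.ReflTransGen (fun a b => a ≠ b ∧ Q a b ≠ 0) i j →
      Relation.ReflTransGen (fun a b => a ≠ b ∧ Q a b ≠ 0) j i → i = j)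
    (lam : ℝ) (hlam_min : ∀ i, lam ≤ q i)
    (i₀ : ι) (hi₀ : q i₀ = lam)
    (hlast : ∀ i, q i = lam → i ≠ i₀ →
      Relation.ReflTransGen (fun a b => a ≠ b ∧ Q a b ≠ 0) i i₀)
    -- geometric multiplicity one for the left eigenvalue -λ
    (hgeo : ∀ ν ν' : ι → ℝ, ν ᵥ* Q = (-lam) • ν → ν' ᵥ* Q = (-lam) • ν' →
      ν ≠ 0 → ∃ c : ℝ, ν' = c • ν) :
    ∀ ν : ι → ℝ, ν ᵥ* Q = (-lam) • ν → (∀ i, 0 ≤ ν i) → (∑ i, ν i = 1) →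
      ∀ j, (0 < ν j ↔ Relation.ReflTransGen (fun a b => a ≠ b ∧ Q a b ≠ 0) i₀ j) := by
  intro ν hν hnn hsum j
  set E : ι → ι → Prop := fun a b => a ≠ b ∧ Q a b ≠ 0 with hEdef
  -- key identity at each coordinate
  have key : ∀ k, ∑ i ∈ Finset.univ.erase k, ν i * Q i k = (q k - lam) * ν k := by
    intro k
    have h1 : ∑ i, ν i * Q i k = -lam * ν k := by
      have := congrFun hν k
      simpa [vecMul, dotProduct, Pi.smul_apply, smul_eq_mul] using this
    have h2 : ∑ i, ν i * Q i k
        = ν k * Q k k + ∑ i ∈ Finset.univ.erase k, ν i * Q i k := by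
      rw [← Finset.add_sum_erase _ _ (Finset.mem_univ k)]
    rw [h2, hdiag] at h1
    linear_combination h1
  -- propagation along a single edge
  have prop : ∀ i k, 0 < ν i → E i k → 0 < ν k ∧ lam < q k := by
    intro i k hi hik
    obtain ⟨hne, hQ⟩ := hik
    have hQpos : 0 < Q i k := lt_of_le_of_ne (hoff i k hne) (Ne.symm hQ)
    have hsum_pos : 0 < ∑ x ∈ Finset.univ.erase k, ν x * Q x k := by
      apply Finset.sum_pos'
      · intro x hx
        exact mul_nonneg (hnn x) (hoff x k (Finset.ne_of_mem_erase hx))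
      · exact ⟨i, Finset.mem_erase.mpr ⟨hne, Finset.mem_univ i⟩, mul_pos hi hQpos⟩
    rw [key k] at hsum_pos
    have hql : lam < q k := by
      rcases lt_or_eq_of_le (hlam_min k) with h | h
      · exact h
      · exfalso; rw [← h] at hsum_pos; simp at hsum_pos
    refine ⟨?_, hql⟩
    nlinarith [hnn k]
  -- forward propagation of positivity along paths
  have fwd : ∀ a b, Relation.ReflTransGen E a b → 0 < ν a → 0 < ν b := by
    intro a b h ha
    induction h with
    | refl => exact ha
    | tail _ e ih => exact (prop _ _ ih e).1
  -- forward propagation of lam < q along paths (starting from positive ν)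
  have fwd2 : ∀ a b, Relation.ReflTransGen E a b → 0 < ν a → lam < q a → lam < q b := by
    intro a b h ha hq
    induction h with
    | refl => exact hq
    | tail h e _ => exact (prop _ _ (fwd _ _ h ha) e).2
  -- strict accessibility order is well-founded
  have strans : ∀ {a b c : ι},
      (Relation.ReflTransGen E a b ∧ a ≠ b) → (Relation.ReflTransGen E b c ∧ b ≠ c) →
      (Relation.ReflTransGen E a c ∧ a ≠ c) := by
    rintro a b c ⟨rab, hab⟩ ⟨rbc, hbc⟩
    refine ⟨rab.trans rbc, ?_⟩
    rintro rfl
    exact hab (hDAG a b rab rbc)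
  haveI : IsTrans ι (fun a b => Relation.ReflTransGen E a b ∧ a ≠ b) :=
    ⟨fun _ _ _ h1 h2 => strans h1 h2⟩
  haveI : IsIrrefl ι (fun a b => Relation.ReflTransGen E a b ∧ a ≠ b) :=
    ⟨fun a h => h.2 rfl⟩
  have wf : WellFounded (fun a b => Relation.ReflTransGen E a b ∧ a ≠ b) :=
    Finite.wellFounded_of_trans_of_irrefl _
  -- every support point is accessible from i₀, and ν i₀ > 0
  have main : ∀ j', 0 < ν j' → 0 < ν i₀ ∧ Relation.ReflTransGen E i₀ j' := by
    intro j' hj'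
    obtain ⟨m, hm, hminl⟩ := wf.has_min
      {x | 0 < ν x ∧ Relation.ReflTransGen E x j'} ⟨j', hj', Relation.ReflTransGen.refl⟩
    obtain ⟨hmpos, hmj'⟩ := hm
    -- m is a minimal support element, hence q m = lam
    have hzero : ∑ i ∈ Finset.univ.erase m, ν i * Q i m = 0 := by
      apply Finset.sum_eq_zero
      intro i hi
      have hi' : i ≠ m := Finset.ne_of_mem_erase hi
      rcases eq_or_ne (ν i) 0 with h | h
      · simp [h]
      rcases eq_or_ne (Q i m) 0 with h2 | h2
      · simp [h2]
      exfalso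
      have hνi : 0 < ν i := lt_of_le_of_ne (hnn i) (Ne.symm h)
      have rim : Relation.ReflTransGen E i m := Relation.ReflTransGen.single ⟨hi', h2⟩
      exact hminl i ⟨hνi, rim.trans hmj'⟩ ⟨rim, hi'⟩
    have hqm : q m = lam := by
      have := key m
      rw [hzero] at this
      rcases mul_eq_zero.mp this.symm with h | h
      · linarith
      · exact absurd h (ne_of_gt hmpos)
    rcases eq_or_ne m i₀ with rfl | hne
    · exact ⟨hmpos, hmj'⟩
    · exfalso
      have rmi : Relation.ReflTransGen E m i₀ := hlast m hqm hne
      rcases rmi.cases_head with h | ⟨c, hmc, hci⟩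
      · exact hne h
      · obtain ⟨hc, hqc⟩ := prop m c hmpos hmc
        have : lam < q i₀ := fwd2 c i₀ hci hc hqc
        rw [hi₀] at this
        exact lt_irrefl _ this
  -- support is nonempty
  have hSne : ∃ i, 0 < ν i := by
    by_contra h
    push_neg at h
    have hz : ∀ i, ν i = 0 := fun i => le_antisymm (h i) (hnn i)
    simp [hz] at hsum
  obtain ⟨k, hk⟩ := hSne
  constructor
  · intro hj
    exact (main j hj).2
  · intro hij
    exact fwd i₀ j hij (main k hk).1
end
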